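/- Let d be a positive divisor of 24 and let r, r' be integers coprime to d with r ≡ r' (mod d). Then r³ − r ≡ r'³ − r' (mod 2d). In other words, the residue of r³ − r modulo 2d is well defined for r in (ℤ/dℤ)ˣ when d divides 24. -/
import Mathlib


/-- Let `d` be a positive divisor of `24` and `r, r'` integers coprime to
`d` with `r ≡ r' (mod d)`. Then `r³ − r ≡ r'³ − r' (mod 2d)`. -/
theorem cube_sub_self_well_defined (d : ℕ) (hd : 0 < d) (hdvd : d ∣ 24)
    (r r' : ℤ) (hr : Int.gcd r d = 1) (hr' : Int.gcd r' d = 1)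
    (hcong : r ≡ r' [ZMOD (d : ℤ)]) :
    r ^ 3 - r ≡ r' ^ 3 - r' [ZMOD (2 * d : ℤ)] := by
  have hdv : (d : ℤ) ∣ r' - r := (Int.modEq_iff_dvd).mp hcong
  have key : ((2 * d : ℤ)) ∣ (r' ^ 3 - r') - (r ^ 3 - r) := by
    have hfac : (r' ^ 3 - r') - (r ^ 3 - r)
        = (r' - r) * (r' ^ 2 + r' * r + r ^ 2 - 1) := by ring
    rcases Nat.even_or_odd d with hde | hdo
    · -- d even : r and r' are odd
      obtain ⟨m, hm⟩ := hde
      have h2d : (2 : ℕ) ∣ d := ⟨m, by omega⟩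
      have hrodd : Odd r := by
        rcases Int.even_or_odd r with ⟨k, hk⟩ | h
        · exfalso
          have : (2 : ℤ) ∣ Int.gcd r d := by
            have h1 : (2 : ℤ) ∣ r := ⟨k, by omega⟩
            have h2 : (2 : ℤ) ∣ (d : ℤ) := by exact_mod_cast Int.natCast_dvd_natCast.mpr h2d
            exact_mod_cast Int.dvd_gcd h1 h2
          rw [hr] at this
          norm_num at this
        · exact h
      have hr'odd : Odd r' := by
        rcases Int.even_or_odd r' with ⟨k, hk⟩ | h
        · exfalso
          have : (2 : ℤ) ∣ Int.gcd r' d := by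
            have h1 : (2 : ℤ) ∣ r' := ⟨k, by omega⟩
            have h2 : (2 : ℤ) ∣ (d : ℤ) := by exact_mod_cast Int.natCast_dvd_natCast.mpr h2d
            exact_mod_cast Int.dvd_gcd h1 h2
          rw [hr'] at this
          norm_num at this
        · exact h
      obtain ⟨a, ha⟩ := hrodd
      obtain ⟨b, hb⟩ := hr'odd
      have heven : (2 : ℤ) ∣ (r' ^ 2 + r' * r + r ^ 2 - 1) :=
        ⟨2 * b ^ 2 + 2 * a * b + 2 * a ^ 2 + 3 * a + 3 * b + 1, by rw [ha, hb]; ring⟩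
      obtain ⟨k, hk⟩ := heven
      obtain ⟨l, hl⟩ := hdv
      rw [hfac, hk, hl]
      exact ⟨l * k, by push_cast; ring⟩
    · -- d odd : 2 ∣ r^3 - r and 2 ∣ r'^3 - r', coprime
      have h2 : ∀ x : ℤ, (2 : ℤ) ∣ x ^ 3 - x := by
        intro x
        rcases Int.even_or_odd x with ⟨k, hk⟩ | ⟨k, hk⟩
        · exact ⟨4 * k ^ 3 - k, by rw [show x = 2*k by omega]; ring⟩
        · exact ⟨4 * k ^ 3 + 6 * k ^ 2 + 2 * k, by rw [hk]; ring⟩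
      have h2diff : (2 : ℤ) ∣ (r' ^ 3 - r') - (r ^ 3 - r) := dvd_sub (h2 r') (h2 r)
      have hddiff : (d : ℤ) ∣ (r' ^ 3 - r') - (r ^ 3 - r) := by
        rw [hfac]; exact Dvd.dvd.mul_right hdv _
      have hcop : IsCoprime (2 : ℤ) (d : ℤ) := by
        rw [Int.isCoprime_iff_gcd_eq_one]
        have : Nat.gcd 2 d = 1 := Nat.coprime_two_left.mpr hdo
        simpa [Int.gcd] using this
      exact hcop.mul_dvd h2diff hddiff
  calc r ^ 3 - r ≡ r ^ 3 - r + (2 * d) * (((r' ^ 3 - r') - (r ^ 3 - r)) / (2 * d))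
        [ZMOD (2 * d : ℤ)] := (Int.modEq_add_fac_self).symm
    _ = r' ^ 3 - r' := by
        obtain ⟨c, hc⟩ := key
        rw [hc]
        rw [Int.mul_ediv_cancel_left]
        · linear_combination -hc
        · positivity
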